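/- Suppose real numbers κc, κd, π_i, π_j, η, τ with η > 0 and τ > 0, and sequences ωc, ωd, ρ̄c, ρ̄d of nonnegative reals indexed by {i, i+1, …, T}, satisfy: (1) κc + π_i + (−∑_{n=i+1}^{T}(ωd_n − ωc_n) + ωc_i)·η·τ + ρ̄c_i = 0; (2) κd − π_j + (∑_{n=j+1}^{T}(ωd_n − ωc_n) + ωd_j)·τ + ρ̄d_j = 0; (3) ωd_n = 0 for all n with i+1 ≤ n ≤ j−1 and ωd_i = 0; and ωc_n ≥ 0 for all n. Then π_i + κc − η·(π_j − κd) ≤ 0. -/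

import Mathlib

/-- Charge-then-discharge price coupling lemma. -/
theorem charge_discharge_price_coupling
    (κc κd πi πj η τ : ℝ) (hη : 0 < η) (hτ : 0 < τ)
    (i j T : ℕ) (hij : i < j) (hjT : j ≤ T)
    (ωc ωd ρc ρd : ℕ → ℝ)
    (hωc : ∀ n, 0 ≤ ωc n) (hωd : ∀ n, 0 ≤ ωd n)
    (hρc : ∀ n, 0 ≤ ρc n) (hρd : ∀ n, 0 ≤ ρd n)
    (heq1 : κc + πi +
        (-(∑ n ∈ Finset.Icc (i + 1) T, (ωd n - ωc n)) + ωc i) * η * τ + ρc i = 0)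
    (heq2 : κd - πj +
        ((∑ n ∈ Finset.Icc (j + 1) T, (ωd n - ωc n)) + ωd j) * τ + ρd j = 0)
    (hωd0 : ∀ n, i + 1 ≤ n → n ≤ j - 1 → ωd n = 0)
    (hωdi : ωd i = 0) :
    πi + κc - η * (πj - κd) ≤ 0 := by
  have hIcc : ∀ k : ℕ, Finset.Icc (k + 1) T = Finset.Ioc k T := by
    intro k; ext n; simp only [Finset.mem_Icc, Finset.mem_Ioc]; omega
  have hsplit : ∑ n ∈ Finset.Icc (i + 1) T, (ωd n - ωc n)
      = (∑ n ∈ Finset.Ioc i j, (ωd n - ωc n))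
        + ∑ n ∈ Finset.Icc (j + 1) T, (ωd n - ωc n) := by
    rw [hIcc, hIcc, Finset.sum_Ioc_consecutive _ hij.le hjT]
  have hωdsum : ∑ n ∈ Finset.Ioc i j, ωd n = ωd j := by
    apply Finset.sum_eq_single_of_mem
    · simp [hij]
    · intro n hn hne
      simp only [Finset.mem_Ioc] at hn
      exact hωd0 n hn.1 (by omega)
  have hsub : ∑ n ∈ Finset.Ioc i j, (ωd n - ωc n)
      = ωd j - ∑ n ∈ Finset.Ioc i j, ωc n := by
    rw [Finset.sum_sub_distrib, hωdsum]
  have hA : 0 ≤ ∑ n ∈ Finset.Ioc i j, ωc n :=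
    Finset.sum_nonneg fun n _ => hωc n
  set A := ∑ n ∈ Finset.Ioc i j, ωc n
  rw [hsplit, hsub] at heq1
  nlinarith [mul_pos hη hτ, hρc i, hρd j, hωc i,
    mul_nonneg (mul_nonneg hA hη.le) hτ.le,
    mul_nonneg (mul_nonneg (hωc i) hη.le) hτ.le,
    mul_nonneg hη.le (hρd j)]
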